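/- Let b ≥ 2 and k ≥ 1 be integers. A positive integer d divides c_k^b(n) for every n ≥ 1 if and only if d divides c_k^b(n) for every n with 1 ≤ n ≤ k. In other words, gcd{ c_k^b(n) : n ≥ 1 } = gcd(c_k^b(1), c_k^b(2), …, c_k^b(k)). -/

import Mathlib

/-- `ckb b k n = 1 + b^n + b^(2n) + ⋯ + b^((k-1)n)`, i.e., `(b^(kn) - 1)/(b^n - 1)` for `n ≥ 1`. -/
def ckb (b k n : ℕ) : ℕ := ∑ i ∈ Finset.range k, b ^ (i * n)

/-- A positive integer `d` divides `c_k^b(n)` for all `n ≥ 1` iff it divides `c_k^b(n)` for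
`1 ≤ n ≤ k`; i.e., `gcd{c_k^b(n) : n ≥ 1} = gcd(c_k^b(1), …, c_k^b(k))`. -/
theorem gcd_ckb_eq_gcd_first_k (b k : ℕ) (hb : 2 ≤ b) (hk : 1 ≤ k) (d : ℕ) (hd : 0 < d) :
    (∀ n : ℕ, 1 ≤ n → d ∣ ckb b k n) ↔ ∀ n : ℕ, 1 ≤ n → n ≤ k → d ∣ ckb b k n := by
  haveI : NeZero d := ⟨hd.ne'⟩
  constructor
  · intro H n h1 _
    exact H n h1
  · intro H n hn
    by_cases hnk : n ≤ k
    · exact H n hn hnk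
    push_neg at hnk
    -- b^k = 1 in ZMod d
    have h1 := H 1 le_rfl hk
    have hsum : (∑ i ∈ Finset.range k, (b : ZMod d) ^ i) = 0 := by
      have : ((ckb b k 1 : ℕ) : ZMod d) = 0 :=
        (ZMod.natCast_eq_zero_iff _ _).mpr h1
      simpa [ckb] using this
    have hb1 : ((b : ZMod d)) ^ k = 1 := by
      have h2 : (b : ZMod d) ^ k - 1 = 0 := by
        rw [← geom_sum_mul, hsum, zero_mul]
      have := sub_eq_zero.mp h2
      simpa using this
    set m := if n % k = 0 then k else n % k with hm
    have hkpos : 0 < k := hk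
    have hm1 : 1 ≤ m := by
      rw [hm]; split_ifs with h0
      · exact hk
      · omega
    have hmk : m ≤ k := by
      rw [hm]; split_ifs with h0
      · exact le_rfl
      · exact le_of_lt (Nat.mod_lt n hkpos)
    obtain ⟨q, hq⟩ : ∃ q, n = m + k * q := by
      by_cases h0 : n % k = 0
      · obtain ⟨q', hq'⟩ := Nat.dvd_of_mod_eq_zero h0
        have hq1 : 1 ≤ q' := by
          rcases Nat.eq_zero_or_pos q' with h | h
          · rw [h, Nat.mul_zero] at hq'; omega
          · exact h
        obtain ⟨q'', rfl⟩ := Nat.exists_eq_add_of_le hq1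
        refine ⟨q'', ?_⟩
        rw [hm, if_pos h0, hq', Nat.mul_add, Nat.mul_one]
      · refine ⟨n / k, ?_⟩
        rw [hm, if_neg h0]
        exact (Nat.mod_add_div n k).symm
    have key : ((ckb b k n : ℕ) : ZMod d) = ((ckb b k m : ℕ) : ZMod d) := by
      simp only [ckb, Nat.cast_sum, Nat.cast_pow]
      refine Finset.sum_congr rfl fun i _ => ?_
      rw [mul_comm i n, mul_comm i m, pow_mul, pow_mul, hq, pow_add, pow_mul, hb1,
        one_pow, mul_one]
    have hdm := H m hm1 hmk
    refine (ZMod.natCast_eq_zero_iff _ _).mp ?_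
    rw [key]
    exact (ZMod.natCast_eq_zero_iff _ _).mpr hdm
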